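/- Let Σ be a connected (X,2)-arc-transitive graph of valency 4 with X acting faithfully on V(Σ), and let Δ be a self-paired X-orbit on Arc₃(Σ) with ℓ₁(Δ) = 3. Then ℷ(Σ,Δ) has valency 6, Ξ(Σ,Δ) has valency 9, both ℷ(Σ,Δ) and Ξ(Σ,Δ) are connected and (X,1)-transitive (X-symmetric but not (X,2)-arc-transitive), and Σ is (X,3)-arc-transitive. -/

import Mathlib

open Pointwise

/-- A 2-arc `(t.1, t.2.1, t.2.2)` of a simple graph. -/
def IsArc2 {V : Type*} (G : SimpleGraph V) (t : V × V × V) : Prop :=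
  G.Adj t.1 t.2.1 ∧ G.Adj t.2.1 t.2.2 ∧ t.1 ≠ t.2.2

/-- A 3-arc `(t.1, t.2.1, t.2.2.1, t.2.2.2)` of a simple graph. -/
def IsArc3 {V : Type*} (G : SimpleGraph V) (t : V × V × V × V) : Prop :=
  G.Adj t.1 t.2.1 ∧ G.Adj t.2.1 t.2.2.1 ∧ G.Adj t.2.2.1 t.2.2.2 ∧
    t.1 ≠ t.2.2.1 ∧ t.2.1 ≠ t.2.2.2

/-- The reverse of a 3-arc. -/
def rev3 {V : Type*} (t : V × V × V × V) : V × V × V × V :=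
  (t.2.2.2, t.2.2.1, t.2.1, t.1)

/-- `G` is regular of valency `d`. -/
def Regular {V : Type*} (G : SimpleGraph V) (d : ℕ) : Prop :=
  ∀ u : V, (G.neighborSet u).ncard = d

/-- The action of `X` preserves the adjacency of `G`. -/
def AdjPres (X : Type*) {V : Type*} [Group X] [MulAction X V] (G : SimpleGraph V) : Prop :=
  ∀ (x : X) (u w : V), G.Adj u w → G.Adj (x • u) (x • w)

/-- `X` is transitive on the vertices. -/
def VertexTrans (X V : Type*) [Group X] [MulAction X V] : Prop :=
  ∀ u w : V, ∃ x : X, x • u = w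

/-- `X` is transitive on the arcs of `G`. -/
def ArcTrans (X : Type*) {V : Type*} [Group X] [MulAction X V] (G : SimpleGraph V) : Prop :=
  ∀ a b : V × V, G.Adj a.1 a.2 → G.Adj b.1 b.2 → ∃ x : X, x • a = b

/-- `G` is `X`-symmetric. -/
def XSymm (X : Type*) {V : Type*} [Group X] [MulAction X V] (G : SimpleGraph V) : Prop :=
  AdjPres X G ∧ VertexTrans X V ∧ ArcTrans X G

/-- `X` is transitive on the 2-arcs of `G`. -/
def Arc2Trans (X : Type*) {V : Type*} [Group X] [MulAction X V] (G : SimpleGraph V) : Prop :=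
  ∀ s t : V × V × V, IsArc2 G s → IsArc2 G t → ∃ x : X, x • s = t

/-- `X` is transitive on the 3-arcs of `G`. -/
def Arc3Trans (X : Type*) {V : Type*} [Group X] [MulAction X V] (G : SimpleGraph V) : Prop :=
  ∀ s t : V × V × V × V, IsArc3 G s → IsArc3 G t → ∃ x : X, x • s = t

/-- `G` is `(X,2)`-arc-transitive. -/
def Arc2TransGraph (X : Type*) {V : Type*} [Group X] [MulAction X V] (G : SimpleGraph V) : Prop :=
  XSymm X G ∧ Arc2Trans X G

/-- `X` is regular on the 2-arcs of `G`, i.e. `G` is `(X,2)`-arc-regular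
(together with `X`-symmetry). -/
def Arc2Reg (X : Type*) {V : Type*} [Group X] [MulAction X V] (G : SimpleGraph V) : Prop :=
  XSymm X G ∧ ∀ s t : V × V × V, IsArc2 G s → IsArc2 G t → ∃! x : X, x • s = t

/-- `Δ` is a self-paired `X`-orbit on the set of 3-arcs of `G`. -/
def SelfPairedOrbit3 (X : Type*) {V : Type*} [Group X] [MulAction X V] (G : SimpleGraph V)
    (Δ : Set (V × V × V × V)) : Prop :=
  (∀ t ∈ Δ, IsArc3 G t) ∧ (∃ t₀ ∈ Δ, Δ = MulAction.orbit X t₀) ∧ ∀ t ∈ Δ, rev3 t ∈ Δ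

/-- `ℓ₁(Δ) = k`:  for each `(τ₁,τ,σ,σ₁) ∈ Δ`, the orbit of `σ₁` under the pointwise
stabilizer of `(τ₁,τ,σ)` in `X` has exactly `k` elements. -/
def Ell1Eq (X : Type*) {V : Type*} [Group X] [MulAction X V]
    (Δ : Set (V × V × V × V)) (k : ℕ) : Prop :=
  ∀ t ∈ Δ, ({u : V | ∃ x : X, x • t.1 = t.1 ∧ x • t.2.1 = t.2.1 ∧
    x • t.2.2.1 = t.2.2.1 ∧ x • t.2.2.2 = u}).ncard = k

/-- A 2-path of `G`, as an ordered triple with distinct vertices. -/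
def Path2 {V : Type*} (G : SimpleGraph V) : Type _ :=
  {p : V × V × V // G.Adj p.1 p.2.1 ∧ G.Adj p.2.1 p.2.2 ∧ p.1 ≠ p.2.2}

/-- The reverse of a 2-path. -/
def p2rev {V : Type*} (G : SimpleGraph V) (p : Path2 G) : Path2 G :=
  ⟨(p.1.2.2, p.1.2.1, p.1.1), p.2.2.1.symm, p.2.1.symm, p.2.2.2.symm⟩

/-- 2-paths of `G` up to reversal. -/
def P2 {V : Type*} (G : SimpleGraph V) : Type _ :=
  Quot (fun p q : Path2 G => q = p2rev G p)

/-- The 2-path (mod reversal) determined by an ordered 2-path. -/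
def P2.mk {V : Type*} (G : SimpleGraph V) (p : Path2 G) : P2 G := Quot.mk _ p

/-- The graph `ℷ(G,Δ)` on the 2-paths of `G`:  `[α₀,α₁,α₂]` is adjacent to
`[α₁,α₂,α₃]` whenever `(α₀,α₁,α₂,α₃) ∈ Δ`. -/
def gimel {V : Type*} (G : SimpleGraph V) (Δ : Set (V × V × V × V)) : SimpleGraph (P2 G) :=
  SimpleGraph.fromRel (fun z w => ∃ p q : Path2 G,
    z = P2.mk G p ∧ w = P2.mk G q ∧ p.1.2.1 = q.1.1 ∧ p.1.2.2 = q.1.2.1 ∧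
    (p.1.1, p.1.2.1, p.1.2.2, q.1.2.2) ∈ Δ)

/-- The block `P_τ` of all 2-paths of `G` with middle vertex `τ`. -/
def PBlock {V : Type*} (G : SimpleGraph V) (τ : V) : Set (P2 G) :=
  {z | ∃ p : Path2 G, z = P2.mk G p ∧ p.1.2.1 = τ}

/-- `x ∈ X` maps the 2-path `z` to the 2-path `w` (under the induced action of `X`
on 2-paths mod reversal). -/
def P2Maps (X : Type*) {V : Type*} [Group X] [MulAction X V] (G : SimpleGraph V)
    (x : X) (z w : P2 G) : Prop :=
  ∃ p q : Path2 G, z = P2.mk G p ∧ w = P2.mk G q ∧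
    (q.1 = x • p.1 ∨ q.1 = x • (p2rev G p).1)

/-- For a graph `H` whose vertices carry an induced `X`-action described by a relation
`M x z w` (“`x` maps `z` to `w`”), `H` is `X`-symmetric:  `X` preserves adjacency and is
transitive on vertices and on arcs. -/
def RelXSymm (X : Type*) {W : Type*} [Group X] (M : X → W → W → Prop)
    (H : SimpleGraph W) : Prop :=
  (∀ (x : X) (z w z' w' : W), H.Adj z w → M x z z' → M x w w' → H.Adj z' w') ∧
  (∀ z w : W, ∃ x : X, M x z w) ∧
  (∀ z₁ z₂ w₁ w₂ : W, H.Adj z₁ z₂ → H.Adj w₁ w₂ → ∃ x : X, M x z₁ w₁ ∧ M x z₂ w₂)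

/-- `X` is transitive on the 2-arcs of `H`, the action being described by `M`. -/
def RelArc2Trans (X : Type*) {W : Type*} [Group X] (M : X → W → W → Prop)
    (H : SimpleGraph W) : Prop :=
  ∀ z₁ z₂ z₃ w₁ w₂ w₃ : W, H.Adj z₁ z₂ → H.Adj z₂ z₃ → z₁ ≠ z₃ →
    H.Adj w₁ w₂ → H.Adj w₂ w₃ → w₁ ≠ w₃ →
    ∃ x : X, M x z₁ w₁ ∧ M x z₂ w₂ ∧ M x z₃ w₃

/-- `X` is regular on the arcs of `H`, the action being described by `M`. -/
def RelArc1Reg (X : Type*) {W : Type*} [Group X] (M : X → W → W → Prop)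
    (H : SimpleGraph W) : Prop :=
  ∀ z₁ z₂ w₁ w₂ : W, H.Adj z₁ z₂ → H.Adj w₁ w₂ →
    ∃! x : X, M x z₁ w₁ ∧ M x z₂ w₂

/-- `X` is regular on the 2-arcs of `H`, the action being described by `M`. -/
def RelArc2Reg (X : Type*) {W : Type*} [Group X] (M : X → W → W → Prop)
    (H : SimpleGraph W) : Prop :=
  ∀ z₁ z₂ z₃ w₁ w₂ w₃ : W, H.Adj z₁ z₂ → H.Adj z₂ z₃ → z₁ ≠ z₃ →
    H.Adj w₁ w₂ → H.Adj w₂ w₃ → w₁ ≠ w₃ →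
    ∃! x : X, M x z₁ w₁ ∧ M x z₂ w₂ ∧ M x z₃ w₃

/-- The arcs of `G`, as a type. -/
def ArcT {V : Type*} (G : SimpleGraph V) : Type _ := {a : V × V // G.Adj a.1 a.2}

/-- The 3-arc graph `Ξ(G,Δ)`:  vertices are the arcs of `G`, and `(τ,τ₁)` is adjacent to
`(σ,σ₁)` iff `(τ₁,τ,σ,σ₁) ∈ Δ`. -/
def Xi {V : Type*} (G : SimpleGraph V) (Δ : Set (V × V × V × V)) : SimpleGraph (ArcT G) :=
  SimpleGraph.fromRel (fun a b => (a.1.2, a.1.1, b.1.1, b.1.2) ∈ Δ)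

/-- The block `A_τ` of all arcs of `G` with initial vertex `τ`. -/
def ABlock {V : Type*} (G : SimpleGraph V) (τ : V) : Set (ArcT G) :=
  {a | a.1.1 = τ}

/-- `x ∈ X` maps the arc `a` to the arc `b`. -/
def ArcMaps (X : Type*) {V : Type*} [Group X] [MulAction X V] (G : SimpleGraph V)
    (x : X) (a b : ArcT G) : Prop :=
  b.1 = x • a.1


section Aux

variable {V X : Type*} [Group X] [MulAction X V] {G : SimpleGraph V}

lemma p2rev_p2rev (p : Path2 G) : p2rev G (p2rev G p) = p := by
  cases p; rfl

lemma P2.mk_p2rev (p : Path2 G) : P2.mk G (p2rev G p) = P2.mk G p :=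
  (Quot.sound (r := fun p q : Path2 G => q = p2rev G p) rfl).symm

lemma P2.mk_eq_mk {p q : Path2 G} : P2.mk G p = P2.mk G q ↔ q = p ∨ q = p2rev G p := by
  constructor
  · intro h
    have key : Quot.lift (fun r : Path2 G => r = p ∨ r = p2rev G p)
        (by
          rintro a b rfl
          apply propext
          constructor
          · rintro (rfl | rfl)
            · exact Or.inr rfl
            · exact Or.inl (p2rev_p2rev p)
          · rintro (h | h)
            · right
              rw [← h, p2rev_p2rev]
            · left
              rw [← p2rev_p2rev a, h, p2rev_p2rev])
        (P2.mk G p) = _ := congrArg _ h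
    have hp : (p = p ∨ p = p2rev G p) := Or.inl rfl
    exact key.mp hp
  · rintro (rfl | rfl)
    · rfl
    · exact (P2.mk_p2rev p).symm

/-- middle vertex of a 2-path class -/
def pmid (G : SimpleGraph V) : P2 G → V :=
  Quot.lift (fun p => p.1.2.1) (by rintro a b rfl; rfl)

@[simp] lemma pmid_mk (p : Path2 G) : pmid G (P2.mk G p) = p.1.2.1 := rfl

/-- endpoints of a 2-path class -/
def pends (G : SimpleGraph V) : P2 G → Sym2 V :=
  Quot.lift (fun p => s(p.1.1, p.1.2.2)) (by rintro a b rfl; exact Sym2.eq_swap.symm)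

@[simp] lemma pends_mk (p : Path2 G) : pends G (P2.mk G p) = s(p.1.1, p.1.2.2) := rfl

lemma P2.inj_mid_ends {z w : P2 G} (h1 : pmid G z = pmid G w) (h2 : pends G z = pends G w) :
    z = w := by
  induction z using Quot.ind with
  | _ p =>
  induction w using Quot.ind with
  | _ q =>
  replace h1 : p.1.2.1 = q.1.2.1 := h1
  replace h2 : s(p.1.1, p.1.2.2) = s(q.1.1, q.1.2.2) := h2
  rw [Sym2.eq_iff] at h2
  change P2.mk G p = P2.mk G q
  rw [P2.mk_eq_mk]
  obtain ⟨h3, h4⟩ | ⟨h3, h4⟩ := h2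
  · left
    apply Subtype.ext
    obtain ⟨hp1, hp2⟩ := p
    obtain ⟨hq1, hq2⟩ := q
    obtain ⟨p1, p2, p3⟩ := hp1
    obtain ⟨q1, q2, q3⟩ := hq1
    simp only [Prod.mk.injEq]
    exact ⟨h3.symm, h1.symm, h4.symm⟩
  · right
    apply Subtype.ext
    obtain ⟨hp1, hp2⟩ := p
    obtain ⟨hq1, hq2⟩ := q
    obtain ⟨p1, p2, p3⟩ := hp1
    obtain ⟨q1, q2, q3⟩ := hq1
    simp only [p2rev, Prod.mk.injEq]
    exact ⟨h4.symm, h1.symm, h3.symm⟩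

end Aux

set_option linter.unusedSectionVars false

section Aux2

variable {V X : Type*} [Fintype V] [Group X] [MulAction X V] {G : SimpleGraph V}
  {Δ : Set (V × V × V × V)}

lemma smul4 (x : X) (a b c d : V) : x • ((a, b, c, d) : V × V × V × V)
    = (x • a, x • b, x • c, x • d) := rfl

lemma smul3 (x : X) (a b c : V) : x • ((a, b, c) : V × V × V) = (x • a, x • b, x • c) := rfl

lemma smul2 (x : X) (a b : V) : x • ((a, b) : V × V) = (x • a, x • b) := rfl

lemma adjpres_rev (hAP : AdjPres X G) {x : X} {u w : V}
    (h : G.Adj (x • u) (x • w)) : G.Adj u w := by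
  have := hAP x⁻¹ _ _ h
  simpa using this

lemma IsArc3.smul (hAP : AdjPres X G) (x : X) {t : V × V × V × V} (h : IsArc3 G t) :
    IsArc3 G (x • t) := by
  obtain ⟨a, b, c, d⟩ := t
  obtain ⟨h1, h2, h3, h4, h5⟩ := h
  exact ⟨hAP x _ _ h1, hAP x _ _ h2, hAP x _ _ h3,
    fun he => h4 (MulAction.injective x he), fun he => h5 (MulAction.injective x he)⟩

lemma IsArc3.rev (h : IsArc3 G t) : IsArc3 G (rev3 t) := by
  obtain ⟨a, b, c, d⟩ := t
  obtain ⟨h1, h2, h3, h4, h5⟩ := h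
  exact ⟨h3.symm, h2.symm, h1.symm, fun he => h5 he.symm, fun he => h4 he.symm⟩

lemma ncard_nbr (hreg : Regular G 4) (u : V) : (G.neighborSet u).ncard = 4 := hreg u

lemma ncard_nbr_diff (hreg : Regular G 4) {u w : V} (h : G.Adj u w) :
    ((G.neighborSet u) \ {w}).ncard = 3 := by
  rw [Set.ncard_diff_singleton_of_mem (by exact h), hreg u]

lemma exists_nbr_ne (hreg : Regular G 4) (u a b : V) :
    ∃ y, G.Adj u y ∧ y ≠ a ∧ y ≠ b := by
  by_contra hc
  push_neg at hc
  have hsub : G.neighborSet u ⊆ {a, b} := by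
    intro y hy
    rcases Classical.em (y = a) with rfl | h1
    · exact Or.inl rfl
    rcases Classical.em (y = b) with rfl | h2
    · exact Or.inr rfl
    exact absurd (hc y hy) (by simp [h1, h2])
  have h1 : (G.neighborSet u).ncard ≤ ({a, b} : Set V).ncard :=
    Set.ncard_le_ncard hsub (Set.toFinite _)
  have h2 : ({a, b} : Set V).ncard ≤ 2 := by
    apply le_trans (Set.ncard_insert_le _ _)
    simp
  rw [hreg u] at h1
  omega

lemma mem_smul (hΔ : SelfPairedOrbit3 X G Δ) {t : V × V × V × V} (ht : t ∈ Δ) (x : X) :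
    x • t ∈ Δ := by
  obtain ⟨-, ⟨t₀, ht₀, rfl⟩, -⟩ := hΔ
  obtain ⟨g, rfl⟩ := ht
  exact ⟨x * g, mul_smul x g t₀⟩

lemma ell1_orbit_eq (hreg : Regular G 4) (hAP : AdjPres X G)
    (hΔ : SelfPairedOrbit3 X G Δ) (hℓ : Ell1Eq X Δ 3) {t : V × V × V × V} (ht : t ∈ Δ) :
    {u : V | ∃ x : X, x • t.1 = t.1 ∧ x • t.2.1 = t.2.1 ∧
      x • t.2.2.1 = t.2.2.1 ∧ x • t.2.2.2 = u} = G.neighborSet t.2.2.1 \ {t.2.1} := by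
  have harc : IsArc3 G t := hΔ.1 t ht
  apply Set.eq_of_subset_of_ncard_le
  · rintro u ⟨x, hx1, hx2, hx3, hx4⟩
    constructor
    · rw [SimpleGraph.mem_neighborSet, ← hx3, ← hx4]
      exact hAP x _ _ harc.2.2.1
    · simp only [Set.mem_singleton_iff]
      intro he
      exact harc.2.2.2.2 (MulAction.injective x (by show x • t.2.2.2 = x • t.2.1; rw [hx4, hx2]; exact he)).symm
  · rw [hℓ t ht, ncard_nbr_diff hreg harc.2.1.symm]
  · exact Set.toFinite _

lemma delta_eq (hreg : Regular G 4) (h2at : Arc2TransGraph X G)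
    (hΔ : SelfPairedOrbit3 X G Δ) (hℓ : Ell1Eq X Δ 3) :
    Δ = {t | IsArc3 G t} := by
  obtain ⟨hAP, hVT, hAT⟩ := h2at.1
  apply Set.eq_of_subset_of_subset
  · exact fun t ht => hΔ.1 t ht
  · rintro ⟨a, b, c, d⟩ hs
    obtain ⟨h1, h2, h3, h4, h5⟩ := hs
    obtain ⟨t₀, ht₀, -⟩ := hΔ.2.1
    obtain ⟨g1, g2, g3, g4, g5⟩ := hΔ.1 t₀ ht₀
    obtain ⟨τ₁, τ, σ, σ₁⟩ := t₀
    -- map the 2-arc (τ₁,τ,σ) to (a,b,c)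
    obtain ⟨x, hx⟩ := h2at.2 (τ₁, τ, σ) (a, b, c) ⟨g1, g2, g4⟩ ⟨h1, h2, h4⟩
    rw [smul3, Prod.mk.injEq, Prod.mk.injEq] at hx
    obtain ⟨hx1, hx2, hx3⟩ := hx
    have hmem : x • (τ₁, τ, σ, σ₁) ∈ Δ := mem_smul hΔ ht₀ x
    rw [smul4, hx1, hx2, hx3] at hmem
    have horb := ell1_orbit_eq hreg hAP hΔ hℓ hmem
    have hd : d ∈ G.neighborSet ((a, b, c, x • σ₁) : V×V×V×V).2.2.1 \
        {((a, b, c, x • σ₁) : V×V×V×V).2.1} := by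
      exact ⟨h3, by simpa using h5.symm⟩
    rw [← horb] at hd
    obtain ⟨y, hy1, hy2, hy3, hy4⟩ := hd
    have := mem_smul hΔ hmem y
    rw [smul4] at this
    simp only at hy1 hy2 hy3 hy4
    rwa [hy1, hy2, hy3, hy4] at this

lemma arc3trans_of (hreg : Regular G 4) (h2at : Arc2TransGraph X G)
    (hΔ : SelfPairedOrbit3 X G Δ) (hℓ : Ell1Eq X Δ 3) : Arc3Trans X G := by
  intro s t hs ht
  have hde := delta_eq hreg h2at hΔ hℓ
  obtain ⟨t₀, ht₀, horb⟩ := hΔ.2.1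
  have hs' : s ∈ MulAction.orbit X t₀ := by rw [← horb, hde]; exact hs
  have ht' : t ∈ MulAction.orbit X t₀ := by rw [← horb, hde]; exact ht
  obtain ⟨g, rfl⟩ := hs'
  obtain ⟨k, rfl⟩ := ht'
  exact ⟨k * g⁻¹, by
    show (k * g⁻¹) • g • t₀ = k • t₀
    rw [smul_smul, inv_mul_cancel_right]⟩

end Aux2

section Aux3
set_option linter.unusedSectionVars false

variable {V X : Type*} [Fintype V] [Group X] [MulAction X V] {G : SimpleGraph V}
  {Δ : Set (V × V × V × V)}

lemma P2.exists_rep (z : P2 G) : ∃ p : Path2 G, z = P2.mk G p := by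
  induction z using Quot.ind with
  | _ p => exact ⟨p, rfl⟩

@[simp] lemma p2rev_val (p : Path2 G) : (p2rev G p).1 = (p.1.2.2, p.1.2.1, p.1.1) := rfl

/-- action of `X` on 2-paths -/
def pact (hAP : AdjPres X G) (x : X) (p : Path2 G) : Path2 G :=
  ⟨x • p.1, hAP x _ _ p.2.1, hAP x _ _ p.2.2.1, fun h => p.2.2.2 (MulAction.injective x h)⟩

@[simp] lemma pact_val (hAP : AdjPres X G) (x : X) (p : Path2 G) :
    (pact hAP x p).1 = (x • p.1.1, x • p.1.2.1, x • p.1.2.2) := by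
  show x • p.1 = _
  obtain ⟨a, b, c⟩ := p.1
  rfl

lemma pact_rev (hAP : AdjPres X G) (x : X) (p : Path2 G) :
    pact hAP x (p2rev G p) = p2rev G (pact hAP x p) := by
  apply Subtype.ext
  simp [pact_val, p2rev_val]

lemma P2Maps_intro (hAP : AdjPres X G) (x : X) (p : Path2 G) :
    P2Maps X G x (P2.mk G p) (P2.mk G (pact hAP x p)) :=
  ⟨p, pact hAP x p, rfl, rfl, Or.inl (by simp [smul3]; rfl)⟩

lemma P2Maps_eq (hAP : AdjPres X G) {x : X} {z w : P2 G} {p : Path2 G}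
    (hz : z = P2.mk G p) (h : P2Maps X G x z w) : w = P2.mk G (pact hAP x p) := by
  obtain ⟨r, r', hzr, hwr', hor⟩ := h
  have hr : r = p ∨ r = p2rev G p := by
    rw [hz] at hzr
    exact P2.mk_eq_mk.mp hzr
  have key : r' = pact hAP x p ∨ r' = p2rev G (pact hAP x p) := by
    rcases hr with rfl | rfl
    · rcases hor with h' | h'
      · exact Or.inl (Subtype.ext h')
      · refine Or.inr (Subtype.ext ?_)
        rw [h', ← pact_rev]
        rfl
    · rcases hor with h' | h'
      · refine Or.inr (Subtype.ext ?_)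
        rw [h', ← pact_rev]
        rfl
      · exact Or.inl (Subtype.ext (by rw [h', p2rev_p2rev]; rfl))
  rcases key with rfl | rfl
  · exact hwr'
  · rw [hwr', P2.mk_p2rev]

lemma P2Maps_mid (hAP : AdjPres X G) {x : X} {z w : P2 G} (h : P2Maps X G x z w) :
    x • pmid G z = pmid G w := by
  obtain ⟨p, rfl⟩ := P2.exists_rep z
  rw [P2Maps_eq hAP rfl h]
  simp only [pmid_mk, pact_val]

/-- constructor for adjacency in `gimel` -/
lemma gimel_adj_cons (hΔall : Δ = {t | IsArc3 G t}) (p q : Path2 G)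
    (h1 : p.1.2.1 = q.1.1) (h2 : p.1.2.2 = q.1.2.1) (h3 : q.1.2.2 ≠ p.1.2.1) :
    (gimel G Δ).Adj (P2.mk G p) (P2.mk G q) := by
  rw [gimel, SimpleGraph.fromRel_adj]
  constructor
  · intro he
    have := congrArg (pmid G) he
    simp only [pmid_mk] at this
    rw [← h2] at this
    exact (p.2.2.1.ne) this
  · left
    refine ⟨p, q, rfl, rfl, h1, h2, ?_⟩
    rw [hΔall]
    refine ⟨p.2.1, p.2.2.1, ?_, p.2.2.2, h3.symm⟩
    rw [h2]
    exact q.2.2.1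

/-- characterization of adjacency in `gimel` -/
lemma gimel_adj_iff (hΔall : Δ = {t | IsArc3 G t}) {z w : P2 G} :
    (gimel G Δ).Adj z w ↔ ∃ p q : Path2 G, z = P2.mk G p ∧ w = P2.mk G q ∧
      p.1.2.1 = q.1.1 ∧ p.1.2.2 = q.1.2.1 ∧
      IsArc3 G (p.1.1, p.1.2.1, p.1.2.2, q.1.2.2) := by
  constructor
  · intro h
    rw [gimel, SimpleGraph.fromRel_adj] at h
    obtain ⟨hne, h | h⟩ := h
    · obtain ⟨p, q, hz, hw, h1, h2, h3⟩ := h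
      rw [hΔall] at h3
      exact ⟨p, q, hz, hw, h1, h2, h3⟩
    · obtain ⟨q, p, hw, hz, h1, h2, h3⟩ := h
      rw [hΔall] at h3
      refine ⟨p2rev G p, p2rev G q, by rw [hz, P2.mk_p2rev], by rw [hw, P2.mk_p2rev],
        ?_, ?_, ?_⟩
      · simp only [p2rev_val]
        exact h2.symm
      · simp only [p2rev_val]
        exact h1.symm
      · simp only [p2rev_val]
        have := IsArc3.rev h3
        simpa [rev3, h1, h2] using this
  · rintro ⟨p, q, rfl, rfl, h1, h2, h3⟩
    exact gimel_adj_cons hΔall p q h1 h2 (by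
      intro he
      exact h3.2.2.2.2 (by rw [h2, he]))

end Aux3

section Aux4
set_option linter.unusedSectionVars false

variable {V X : Type*} [Fintype V] [Group X] [MulAction X V] {G : SimpleGraph V}
  {Δ : Set (V × V × V × V)}

lemma gimel_nbhd (hΔall : Δ = {t | IsArc3 G t}) (p : Path2 G) {w : P2 G} :
    (gimel G Δ).Adj (P2.mk G p) w ↔ ∃ d,
      ((G.Adj p.1.2.2 d ∧ d ≠ p.1.2.1) ∧ pmid G w = p.1.2.2 ∧ pends G w = s(p.1.2.1, d)) ∨
      ((G.Adj p.1.1 d ∧ d ≠ p.1.2.1) ∧ pmid G w = p.1.1 ∧ pends G w = s(p.1.2.1, d)) := by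
  constructor
  · intro h
    rw [gimel_adj_iff hΔall] at h
    obtain ⟨P, Q, hz, hw, h1, h2, h3⟩ := h
    have hP : P = p ∨ P = p2rev G p := P2.mk_eq_mk.mp hz
    rcases hP with rfl | rfl
    · refine ⟨Q.1.2.2, Or.inl ⟨⟨h3.2.2.1, fun he => h3.2.2.2.2 he.symm⟩, ?_, ?_⟩⟩
      · rw [hw, pmid_mk]; exact h2.symm
      · rw [hw, pends_mk, ← h1]
    · simp only [p2rev_val] at h1 h2 h3
      refine ⟨Q.1.2.2, Or.inr ⟨⟨h3.2.2.1, fun he => h3.2.2.2.2 he.symm⟩, ?_, ?_⟩⟩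
      · rw [hw, pmid_mk]; exact h2.symm
      · rw [hw, pends_mk, ← h1]
  · rintro ⟨d, ⟨⟨ha, hd⟩, hm, he⟩ | ⟨⟨ha, hd⟩, hm, he⟩⟩
    · have hq : w = P2.mk G ⟨(p.1.2.1, p.1.2.2, d), p.2.2.1, ha, fun h => hd h.symm⟩ := by
        apply P2.inj_mid_ends
        · rw [hm]; rfl
        · rw [he]; rfl
      rw [hq]
      exact gimel_adj_cons hΔall p _ rfl rfl hd
    · have hq : w = P2.mk G ⟨(p.1.2.1, p.1.1, d), p.2.1.symm, ha, fun h => hd h.symm⟩ := by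
        apply P2.inj_mid_ends
        · rw [hm]; rfl
        · rw [he]; rfl
      rw [hq, ← P2.mk_p2rev p]
      exact gimel_adj_cons hΔall (p2rev G p) _ rfl rfl hd

lemma gimel_valency (hreg : Regular G 4) (hΔall : Δ = {t | IsArc3 G t}) :
    Regular (gimel G Δ) 6 := by
  intro z
  obtain ⟨p, rfl⟩ := P2.exists_rep z
  have hinj : Function.Injective (fun w : P2 G => (pmid G w, pends G w)) := by
    intro z w h
    exact P2.inj_mid_ends (congrArg Prod.fst h) (congrArg Prod.snd h)
  rw [← Set.ncard_image_of_injective _ hinj]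
  have himg : (fun w : P2 G => (pmid G w, pends G w)) '' ((gimel G Δ).neighborSet (P2.mk G p)) =
      (fun d => (p.1.2.2, s(p.1.2.1, d))) '' (G.neighborSet p.1.2.2 \ {p.1.2.1}) ∪
      (fun d => (p.1.1, s(p.1.2.1, d))) '' (G.neighborSet p.1.1 \ {p.1.2.1}) := by
    ext ⟨m, e⟩
    constructor
    · rintro ⟨w, hw, hweq⟩
      rw [SimpleGraph.mem_neighborSet, gimel_nbhd hΔall] at hw
      have hweq' : (pmid G w, pends G w) = (m, e) := hweq
      obtain ⟨d, ⟨⟨ha, hd⟩, hm, he⟩ | ⟨⟨ha, hd⟩, hm, he⟩⟩ := hw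
      · rw [hm, he] at hweq'
        left
        exact ⟨d, ⟨ha, hd⟩, hweq'⟩
      · rw [hm, he] at hweq'
        right
        exact ⟨d, ⟨ha, hd⟩, hweq'⟩
    · rintro (⟨d, ⟨ha, hd⟩, heq⟩ | ⟨d, ⟨ha, hd⟩, heq⟩)
      · have ha' : G.Adj p.1.2.2 d := ha
        have hd' : d ≠ p.1.2.1 := hd
        refine ⟨P2.mk G ⟨(p.1.2.1, p.1.2.2, d), p.2.2.1, ha', fun h => hd' h.symm⟩, ?_, ?_⟩
        · rw [SimpleGraph.mem_neighborSet, gimel_nbhd hΔall]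
          exact ⟨d, Or.inl ⟨⟨ha', hd'⟩, rfl, rfl⟩⟩
        · exact heq
      · have ha' : G.Adj p.1.1 d := ha
        have hd' : d ≠ p.1.2.1 := hd
        refine ⟨P2.mk G ⟨(p.1.2.1, p.1.1, d), p.2.1.symm, ha', fun h => hd' h.symm⟩, ?_, ?_⟩
        · rw [SimpleGraph.mem_neighborSet, gimel_nbhd hΔall]
          exact ⟨d, Or.inr ⟨⟨ha', hd'⟩, rfl, rfl⟩⟩
        · exact heq
  rw [himg]
  have hpne : p.1.2.2 ≠ p.1.1 := fun h => p.2.2.2 h.symm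
  have hdisj : Disjoint
      ((fun d => (p.1.2.2, s(p.1.2.1, d))) '' (G.neighborSet p.1.2.2 \ {p.1.2.1}))
      ((fun d => (p.1.1, s(p.1.2.1, d))) '' (G.neighborSet p.1.1 \ {p.1.2.1})) := by
    rw [Set.disjoint_left]
    rintro ⟨m, e⟩ ⟨d, hd, heq⟩ ⟨d', hd', heq'⟩
    rw [← heq'] at heq
    exact hpne (congrArg Prod.fst heq)
  rw [Set.ncard_union_eq hdisj (Set.Finite.image _ (Set.toFinite _))
    (Set.Finite.image _ (Set.toFinite _))]
  have hinj1 : Set.InjOn (fun d => ((p.1.2.2, s(p.1.2.1, d)) : V × Sym2 V))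
      (G.neighborSet p.1.2.2 \ {p.1.2.1}) := by
    intro d hd d' hd' h
    have h2 := congrArg Prod.snd h
    simp only [Sym2.eq_iff] at h2
    rcases h2 with ⟨-, h2⟩ | ⟨h2, h3⟩
    · exact h2
    · exact absurd h3 hd.2
  have hinj2 : Set.InjOn (fun d => ((p.1.1, s(p.1.2.1, d)) : V × Sym2 V))
      (G.neighborSet p.1.1 \ {p.1.2.1}) := by
    intro d hd d' hd' h
    have h2 := congrArg Prod.snd h
    simp only [Sym2.eq_iff] at h2
    rcases h2 with ⟨-, h2⟩ | ⟨h2, h3⟩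
    · exact h2
    · exact absurd h3 hd.2
  rw [Set.ncard_image_of_injOn hinj1, Set.ncard_image_of_injOn hinj2,
    ncard_nbr_diff hreg p.2.2.1.symm, ncard_nbr_diff hreg p.2.1]

end Aux4

section Aux5
set_option linter.unusedSectionVars false

variable {V X : Type*} [Fintype V] [Group X] [MulAction X V] {G : SimpleGraph V}
  {Δ : Set (V × V × V × V)}

lemma xi_adj_iff (hΔall : Δ = {t | IsArc3 G t}) {a b : ArcT G} :
    (Xi G Δ).Adj a b ↔ IsArc3 G (a.1.2, a.1.1, b.1.1, b.1.2) := by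
  constructor
  · intro h
    rw [Xi, SimpleGraph.fromRel_adj] at h
    obtain ⟨hne, h | h⟩ := h
    · rw [hΔall] at h
      exact h
    · rw [hΔall] at h
      have := IsArc3.rev h
      simpa [rev3] using this
  · intro h
    rw [Xi, SimpleGraph.fromRel_adj]
    refine ⟨?_, Or.inl (by rw [hΔall]; exact h)⟩
    intro he
    exact h.2.1.ne (by rw [he])

lemma card_nbrF [DecidableRel G.Adj] (hreg : Regular G 4) (v : V) :
    (G.neighborFinset v).card = 4 := by
  rw [SimpleGraph.neighborFinset_def, ← Set.ncard_coe_finset, Set.coe_toFinset]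
  exact hreg v

lemma xi_valency (hreg : Regular G 4) (hΔall : Δ = {t | IsArc3 G t}) :
    Regular (Xi G Δ) 9 := by
  classical
  intro a
  have hval : Function.Injective (Subtype.val : ArcT G → V × V) := Subtype.val_injective
  rw [← Set.ncard_image_of_injective (α := ArcT G) ((Xi G Δ).neighborSet a) hval]
  have himg : Set.image (α := ArcT G) Subtype.val ((Xi G Δ).neighborSet a) =
      ↑(((G.neighborFinset a.1.1).erase a.1.2).biUnion
        (fun σ => ((G.neighborFinset σ).erase a.1.1).image (fun d => (σ, d)))) := by
    ext c
    simp only [Finset.coe_biUnion, Set.mem_iUnion, Finset.mem_coe, Finset.mem_erase,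
      SimpleGraph.mem_neighborFinset, Finset.mem_image]
    constructor
    · rintro ⟨b, hb, rfl⟩
      rw [SimpleGraph.mem_neighborSet, xi_adj_iff hΔall] at hb
      exact ⟨b.1.1, ⟨fun he => hb.2.2.2.1 he.symm, hb.2.1⟩, b.1.2,
        ⟨fun he => hb.2.2.2.2 he.symm, hb.2.2.1⟩, rfl⟩
    · rintro ⟨σ, ⟨hσ1, hσ2⟩, d, ⟨hd1, hd2⟩, rfl⟩
      refine ⟨(⟨(σ, d), hd2⟩ : ArcT G), ?_, rfl⟩
      apply (xi_adj_iff hΔall).mpr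
      exact ⟨a.2.symm, hσ2, hd2, fun he => hσ1 he.symm, fun he => hd1 he.symm⟩
  rw [himg, Set.ncard_coe_finset]
  rw [Finset.card_biUnion]
  · rw [Finset.sum_congr rfl (g := fun _ => 3) (fun σ hσ => by
      rw [Finset.card_image_of_injective _ (fun x y hxy => (Prod.ext_iff.mp hxy).2),
        Finset.card_erase_of_mem, card_nbrF hreg]
      rw [SimpleGraph.mem_neighborFinset]
      rw [Finset.mem_erase, SimpleGraph.mem_neighborFinset] at hσ
      exact hσ.2.symm)]
    rw [Finset.sum_const, Finset.card_erase_of_mem, card_nbrF hreg]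
    · rfl
    · rw [SimpleGraph.mem_neighborFinset]
      exact a.2
  · intro x hx y hy hxy
    rw [Function.onFun, Finset.disjoint_left]
    rintro ⟨c1, c2⟩ hc1 hc2
    rw [Finset.mem_image] at hc1 hc2
    obtain ⟨d1, -, he1⟩ := hc1
    obtain ⟨d2, -, he2⟩ := hc2
    exact hxy (Prod.ext_iff.mp (he1.trans he2.symm)).1

end Aux5

section Aux6
set_option linter.unusedSectionVars false

variable {V X : Type*} [Fintype V] [Group X] [MulAction X V] {G : SimpleGraph V}
  {Δ : Set (V × V × V × V)}

lemma mk_eq_of_val {p q : Path2 G} (h : p.1 = q.1) : P2.mk G p = P2.mk G q := by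
  rw [Subtype.ext h]

lemma mk_eq_of_rev {p q : Path2 G} (h : q.1 = (p.1.2.2, p.1.2.1, p.1.1)) :
    P2.mk G p = P2.mk G q :=
  P2.mk_eq_mk.mpr (Or.inr (Subtype.ext h))

lemma xi_adj_cons (hΔall : Δ = {t | IsArc3 G t}) {a b : ArcT G}
    (h1 : G.Adj a.1.1 b.1.1) (h2 : b.1.1 ≠ a.1.2) (h3 : b.1.2 ≠ a.1.1) :
    (Xi G Δ).Adj a b :=
  (xi_adj_iff hΔall).mpr ⟨a.2.symm, h1, b.2, fun he => h2 he.symm, fun he => h3 he.symm⟩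

lemma xi_same_tail (hreg : Regular G 4) (hΔall : Δ = {t | IsArc3 G t}) (a b : ArcT G)
    (h : a.1.1 = b.1.1) : (Xi G Δ).Reachable a b := by
  obtain ⟨σ, hσ1, hσ2, hσ3⟩ := exists_nbr_ne hreg a.1.1 a.1.2 b.1.2
  obtain ⟨σ₁, hσ₁1, hσ₁2, -⟩ := exists_nbr_ne hreg σ a.1.1 a.1.1
  have h1 : (Xi G Δ).Adj a ⟨(σ, σ₁), hσ₁1⟩ := xi_adj_cons hΔall hσ1 hσ2 hσ₁2
  have h2 : (Xi G Δ).Adj (⟨(σ, σ₁), hσ₁1⟩ : ArcT G) b := by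
    apply xi_adj_cons hΔall
    · exact (h ▸ hσ1).symm
    · rw [← h]
      exact fun he => hσ₁2 he.symm
    · exact hσ3.symm
  exact h1.reachable.trans h2.reachable

lemma xi_tail_move (hreg : Regular G 4) (hΔall : Δ = {t | IsArc3 G t}) (a : ArcT G)
    {σ : V} (h : G.Adj a.1.1 σ) : ∃ b : ArcT G, b.1.1 = σ ∧ (Xi G Δ).Reachable a b := by
  obtain ⟨τ', hτ'1, hτ'2, -⟩ := exists_nbr_ne hreg a.1.1 σ σ
  obtain ⟨σ₁, hσ₁1, hσ₁2, -⟩ := exists_nbr_ne hreg σ a.1.1 a.1.1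
  refine ⟨⟨(σ, σ₁), hσ₁1⟩, rfl, ?_⟩
  have h1 : (Xi G Δ).Reachable a ⟨(a.1.1, τ'), hτ'1⟩ := xi_same_tail hreg hΔall _ _ rfl
  have h2 : (Xi G Δ).Adj (⟨(a.1.1, τ'), hτ'1⟩ : ArcT G) ⟨(σ, σ₁), hσ₁1⟩ :=
    xi_adj_cons hΔall h (fun he => hτ'2 he.symm) hσ₁2
  exact h1.trans h2.reachable

lemma xi_connected (hreg : Regular G 4) (hconn : G.Connected)
    (hΔall : Δ = {t | IsArc3 G t}) : (Xi G Δ).Connected := by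
  have hne : Nonempty (ArcT G) := by
    obtain ⟨v⟩ := hconn.nonempty
    obtain ⟨w, hw, -, -⟩ := exists_nbr_ne hreg v v v
    exact ⟨⟨(v, w), hw⟩⟩
  rw [SimpleGraph.connected_iff]
  refine ⟨?_, hne⟩
  intro a b
  have key : ∀ (u v : V) (p : G.Walk u v) (a c : ArcT G), a.1.1 = u → c.1.1 = v →
      (Xi G Δ).Reachable a c := by
    intro u v p
    induction p with
    | nil => exact fun a c ha hc => xi_same_tail hreg hΔall a c (ha.trans hc.symm)
    | cons h p ih =>
      intro a c ha hc
      obtain ⟨d, hd1, hd2⟩ := xi_tail_move hreg hΔall a (ha ▸ h)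
      exact hd2.trans (ih d c hd1 hc)
  obtain ⟨p⟩ := hconn.preconnected a.1.1 b.1.1
  exact key a.1.1 b.1.1 p a b rfl rfl

lemma gimel_T (hreg : Regular G 4) (hΔall : Δ = {t | IsArc3 G t}) (p : Path2 G)
    {e : V} (he : G.Adj p.1.2.1 e) (hne : e ≠ p.1.2.2) :
    ∃ q : Path2 G, q.1 = (p.1.2.2, p.1.2.1, e) ∧
      (gimel G Δ).Reachable (P2.mk G p) (P2.mk G q) := by
  obtain ⟨x, hx1, hx2, -⟩ := exists_nbr_ne hreg p.1.2.2 p.1.2.1 p.1.2.1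
  refine ⟨⟨(p.1.2.2, p.1.2.1, e), p.2.2.1.symm, he, fun h => hne h.symm⟩, rfl, ?_⟩
  have h1 : (gimel G Δ).Adj (P2.mk G p)
      (P2.mk G ⟨(p.1.2.1, p.1.2.2, x), p.2.2.1, hx1, fun h => hx2 h.symm⟩) :=
    gimel_adj_cons hΔall p _ rfl rfl hx2
  have h2 : (gimel G Δ).Adj
      (P2.mk G (p2rev G ⟨(p.1.2.1, p.1.2.2, x), p.2.2.1, hx1, fun h => hx2 h.symm⟩))
      (P2.mk G ⟨(p.1.2.2, p.1.2.1, e), p.2.2.1.symm, he, fun h => hne h.symm⟩) :=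
    gimel_adj_cons hΔall _ _ rfl rfl hne
  erw [P2.mk_p2rev] at h2
  exact h1.reachable.trans h2.reachable

lemma gimel_same_mid (hreg : Regular G 4) (hΔall : Δ = {t | IsArc3 G t}) (p q : Path2 G)
    (h : p.1.2.1 = q.1.2.1) : (gimel G Δ).Reachable (P2.mk G p) (P2.mk G q) := by
  by_cases hw : q.1.2.2 = p.1.2.2
  · by_cases hu : q.1.1 = p.1.1
    · rw [mk_eq_of_val (p := p) (q := q)
        (Prod.ext_iff.mpr ⟨hu.symm, Prod.ext_iff.mpr ⟨h, hw.symm⟩⟩)]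
    · obtain ⟨r, hr1, hr2⟩ := gimel_T hreg hΔall p
        (show G.Adj p.1.2.1 q.1.1 by rw [h]; exact q.2.1.symm)
        (fun he => q.2.2.2 (he.trans hw.symm))
      have hkey : P2.mk G r = P2.mk G q := by
        apply P2.inj_mid_ends
        · show r.1.2.1 = q.1.2.1
          rw [hr1]
          exact h
        · show s(r.1.1, r.1.2.2) = s(q.1.1, q.1.2.2)
          rw [hr1, hw]
          exact Sym2.eq_swap
      rw [← hkey]
      exact hr2
  · have hbw : G.Adj p.1.2.1 q.1.2.2 := by rw [h]; exact q.2.2.1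
    obtain ⟨r1, hr11, hr12⟩ := gimel_T hreg hΔall p hbw hw
    by_cases hu : q.1.1 = p.1.2.2
    · have hkey : P2.mk G r1 = P2.mk G q := by
        apply P2.inj_mid_ends
        · show r1.1.2.1 = q.1.2.1
          rw [hr11]
          exact h
        · show s(r1.1.1, r1.1.2.2) = s(q.1.1, q.1.2.2)
          rw [hr11, hu]
      rw [← hkey]
      exact hr12
    · have ha1 : G.Adj r1.1.2.1 q.1.1 := by
        rw [hr11]
        show G.Adj p.1.2.1 q.1.1
        rw [h]
        exact q.2.1.symm
      have ha2 : q.1.1 ≠ r1.1.2.2 := by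
        rw [hr11]
        exact q.2.2.2
      obtain ⟨r2, hr21, hr22⟩ := gimel_T hreg hΔall r1 ha1 ha2
      have hkey : P2.mk G r2 = P2.mk G q := by
        apply P2.inj_mid_ends
        · show r2.1.2.1 = q.1.2.1
          rw [hr21, hr11]
          exact h
        · show s(r2.1.1, r2.1.2.2) = s(q.1.1, q.1.2.2)
          rw [hr21, hr11]
          exact Sym2.eq_swap
      rw [← hkey]
      exact hr12.trans hr22

lemma gimel_mid_move (hreg : Regular G 4) (hΔall : Δ = {t | IsArc3 G t}) (p : Path2 G)
    {v : V} (h : G.Adj p.1.2.1 v) :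
    ∃ q : Path2 G, q.1.2.1 = v ∧ (gimel G Δ).Reachable (P2.mk G p) (P2.mk G q) := by
  obtain ⟨u0, hu01, hu02, -⟩ := exists_nbr_ne hreg p.1.2.1 v v
  obtain ⟨x, hx1, hx2, -⟩ := exists_nbr_ne hreg v p.1.2.1 p.1.2.1
  have hq0 : G.Adj u0 p.1.2.1 := hu01.symm
  refine ⟨⟨(p.1.2.1, v, x), h, hx1, fun he => hx2 he.symm⟩, rfl, ?_⟩
  have hstep := gimel_same_mid hreg hΔall p
    (⟨(u0, p.1.2.1, v), hq0, h, fun he => hu02 he⟩ : Path2 G) rfl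
  refine hstep.trans ?_
  have hadj : (gimel G Δ).Adj
      (P2.mk G (⟨(u0, p.1.2.1, v), hq0, h, fun he => hu02 he⟩ : Path2 G))
      (P2.mk G (⟨(p.1.2.1, v, x), h, hx1, fun he => hx2 he.symm⟩ : Path2 G)) :=
    gimel_adj_cons hΔall _ _ rfl rfl hx2
  exact hadj.reachable

lemma gimel_connected (hreg : Regular G 4) (hconn : G.Connected)
    (hΔall : Δ = {t | IsArc3 G t}) : (gimel G Δ).Connected := by
  have hne : Nonempty (P2 G) := by
    obtain ⟨v⟩ := hconn.nonempty
    obtain ⟨w, hw, -, -⟩ := exists_nbr_ne hreg v v v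
    obtain ⟨c, hc1, hc2, -⟩ := exists_nbr_ne hreg w v v
    exact ⟨P2.mk G ⟨(v, w, c), hw, hc1, fun he => hc2 he.symm⟩⟩
  rw [SimpleGraph.connected_iff]
  refine ⟨?_, hne⟩
  intro z₁ z₂
  obtain ⟨q, rfl⟩ := P2.exists_rep z₂
  obtain ⟨p, rfl⟩ := P2.exists_rep z₁
  have key : ∀ (u v : V) (w : G.Walk u v) (p q : Path2 G), p.1.2.1 = u → q.1.2.1 = v →
      (gimel G Δ).Reachable (P2.mk G p) (P2.mk G q) := by
    intro u v w
    induction w with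
    | nil => exact fun p q hp hq => gimel_same_mid hreg hΔall p q (hp.trans hq.symm)
    | cons hadj w ih =>
      intro p q hp hq
      obtain ⟨r, hr1, hr2⟩ := gimel_mid_move hreg hΔall p (hp ▸ hadj)
      exact hr2.trans (ih r q hr1 hq)
  obtain ⟨w⟩ := hconn.preconnected p.1.2.1 q.1.2.1
  exact key p.1.2.1 q.1.2.1 w p q rfl rfl

end Aux6

section Aux7
set_option linter.unusedSectionVars false

variable {V X : Type*} [Fintype V] [Group X] [MulAction X V] {G : SimpleGraph V}
  {Δ : Set (V × V × V × V)}

lemma xi_relxsymm (hAP : AdjPres X G) (hAT : ArcTrans X G) (h3T : Arc3Trans X G)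
    (hΔall : Δ = {t | IsArc3 G t}) : RelXSymm X (ArcMaps X G) (Xi G Δ) := by
  refine ⟨?_, ?_, ?_⟩
  · intro x z w z' w' hadj hz hw
    have h1 : z'.1.1 = x • z.1.1 := congrArg Prod.fst hz
    have h2 : z'.1.2 = x • z.1.2 := congrArg Prod.snd hz
    have h3 : w'.1.1 = x • w.1.1 := congrArg Prod.fst hw
    have h4 : w'.1.2 = x • w.1.2 := congrArg Prod.snd hw
    rw [xi_adj_iff hΔall] at hadj ⊢
    rw [h1, h2, h3, h4]
    exact IsArc3.smul hAP x hadj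
  · intro z w
    obtain ⟨x, hx⟩ := hAT z.1 w.1 z.2 w.2
    exact ⟨x, hx.symm⟩
  · intro z₁ z₂ w₁ w₂ h h'
    rw [xi_adj_iff hΔall] at h h'
    obtain ⟨x, hx⟩ := h3T _ _ h h'
    have c1 : x • z₁.1.2 = w₁.1.2 := congrArg (fun t : V×V×V×V => t.1) hx
    have c2 : x • z₁.1.1 = w₁.1.1 := congrArg (fun t : V×V×V×V => t.2.1) hx
    have c3 : x • z₂.1.1 = w₂.1.1 := congrArg (fun t : V×V×V×V => t.2.2.1) hx
    have c4 : x • z₂.1.2 = w₂.1.2 := congrArg (fun t : V×V×V×V => t.2.2.2) hx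
    exact ⟨x, Prod.ext_iff.mpr ⟨c2.symm, c1.symm⟩, Prod.ext_iff.mpr ⟨c3.symm, c4.symm⟩⟩

lemma xi_not_2at (hreg : Regular G 4) (hΔ : SelfPairedOrbit3 X G Δ)
    (hΔall : Δ = {t | IsArc3 G t}) : ¬ RelArc2Trans X (ArcMaps X G) (Xi G Δ) := by
  intro h2T
  obtain ⟨t₀, ht₀, -⟩ := hΔ.2.1
  have harc : IsArc3 G t₀ := hΔ.1 t₀ ht₀
  obtain ⟨τ₁, τ, σ, σ₁⟩ := t₀
  obtain ⟨g1, g2, g3, g4, g5⟩ := harc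
  -- z₁ = (τ, τ₁), z₂ = (σ, σ₁)
  set z₁ : ArcT G := ⟨(τ, τ₁), g1.symm⟩ with hz₁
  set z₂ : ArcT G := ⟨(σ, σ₁), g3⟩ with hz₂
  obtain ⟨δ₁, hδ₁1, hδ₁2, hδ₁3⟩ := exists_nbr_ne hreg τ σ τ₁
  set z₃ : ArcT G := ⟨(τ, δ₁), hδ₁1⟩ with hz₃
  obtain ⟨δ, hδ1, hδ2, hδ3⟩ := exists_nbr_ne hreg σ σ₁ τ
  obtain ⟨δ₁', hδ₁'1, hδ₁'2, -⟩ := exists_nbr_ne hreg δ σ σ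
  set w₃ : ArcT G := ⟨(δ, δ₁'), hδ₁'1⟩ with hw₃
  have hz12 : (Xi G Δ).Adj z₁ z₂ := (xi_adj_iff hΔall).mpr ⟨g1, g2, g3, g4, g5⟩
  have hz23 : (Xi G Δ).Adj z₂ z₃ :=
    (xi_adj_iff hΔall).mpr ⟨g3.symm, g2.symm, hδ₁1, fun he => g5 he.symm, fun he => hδ₁2 he.symm⟩
  have hz13 : z₁ ≠ z₃ := by
    intro he
    have := congrArg (fun a : ArcT G => a.1.2) he
    exact hδ₁3 this.symm
  have hw23 : (Xi G Δ).Adj z₂ w₃ :=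
    (xi_adj_iff hΔall).mpr ⟨g3.symm, hδ1, hδ₁'1, fun he => hδ2 he.symm, fun he => hδ₁'2 he.symm⟩
  have hw13 : z₁ ≠ w₃ := by
    intro he
    have := congrArg (fun a : ArcT G => a.1.1) he
    exact hδ3 this.symm
  obtain ⟨x, hx1, hx2, hx3⟩ := h2T z₁ z₂ z₃ z₁ z₂ w₃ hz12 hz23 hz13 hz12 hw23 hw13
  -- hx1 : z₁.1 = x • z₁.1, hx3 : w₃.1 = x • z₃.1
  have hxτ : x • τ = τ := (congrArg Prod.fst hx1).symm
  have hxδ : δ = x • τ := congrArg Prod.fst hx3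
  exact hδ3 (hxδ.trans hxτ)

end Aux7

section Aux8
set_option linter.unusedSectionVars false

variable {V X : Type*} [Fintype V] [Group X] [MulAction X V] {G : SimpleGraph V}
  {Δ : Set (V × V × V × V)}

lemma gimel_relxsymm (hAP : AdjPres X G) (h2T : Arc2Trans X G) (h3T : Arc3Trans X G)
    (hΔall : Δ = {t | IsArc3 G t}) : RelXSymm X (P2Maps X G) (gimel G Δ) := by
  refine ⟨?_, ?_, ?_⟩
  · intro x z w z' w' hadj hz hw
    rw [gimel_adj_iff hΔall] at hadj ⊢
    obtain ⟨p, q, hzp, hwq, h1, h2, h3⟩ := hadj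
    refine ⟨pact hAP x p, pact hAP x q, P2Maps_eq hAP hzp hz, P2Maps_eq hAP hwq hw, ?_, ?_, ?_⟩
    · simp only [pact_val]
      exact congrArg (x • ·) h1
    · simp only [pact_val]
      exact congrArg (x • ·) h2
    · simp only [pact_val]
      exact IsArc3.smul hAP x h3
  · intro z w
    obtain ⟨p, rfl⟩ := P2.exists_rep z
    obtain ⟨q, rfl⟩ := P2.exists_rep w
    obtain ⟨x, hx⟩ := h2T p.1 q.1 ⟨p.2.1, p.2.2.1, p.2.2.2⟩ ⟨q.2.1, q.2.2.1, q.2.2.2⟩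
    exact ⟨x, p, q, rfl, rfl, Or.inl hx.symm⟩
  · intro z₁ z₂ w₁ w₂ h h'
    rw [gimel_adj_iff hΔall] at h h'
    obtain ⟨p, q, hz1, hz2, h1, h2, h3⟩ := h
    obtain ⟨p', q', hw1, hw2, h1', h2', h3'⟩ := h'
    obtain ⟨x, hx⟩ := h3T _ _ h3 h3'
    have c1 : x • p.1.1 = p'.1.1 := congrArg (fun t : V×V×V×V => t.1) hx
    have c2 : x • p.1.2.1 = p'.1.2.1 := congrArg (fun t : V×V×V×V => t.2.1) hx
    have c3 : x • p.1.2.2 = p'.1.2.2 := congrArg (fun t : V×V×V×V => t.2.2.1) hx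
    have c4 : x • q.1.2.2 = q'.1.2.2 := congrArg (fun t : V×V×V×V => t.2.2.2) hx
    refine ⟨x, ⟨p, p', hz1, hw1, Or.inl ?_⟩, ⟨q, q', hz2, hw2, Or.inl ?_⟩⟩
    · exact (Prod.ext_iff.mpr ⟨c1, Prod.ext_iff.mpr ⟨c2, c3⟩⟩).symm
    · refine (Prod.ext_iff.mpr ⟨?_, Prod.ext_iff.mpr ⟨?_, c4⟩⟩).symm
      · show x • q.1.1 = q'.1.1
        rw [← h1, ← h1']
        exact c2
      · show x • q.1.2.1 = q'.1.2.1
        rw [← h2, ← h2']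
        exact c3

lemma gimel_not_2at (hreg : Regular G 4) (hAP : AdjPres X G) (hΔ : SelfPairedOrbit3 X G Δ)
    (hΔall : Δ = {t | IsArc3 G t}) : ¬ RelArc2Trans X (P2Maps X G) (gimel G Δ) := by
  intro h2T
  obtain ⟨t₀, ht₀, -⟩ := hΔ.2.1
  have harc : IsArc3 G t₀ := hΔ.1 t₀ ht₀
  obtain ⟨τ₁, τ, σ, σ₁⟩ := t₀
  obtain ⟨g1, g2, g3, g4, g5⟩ := harc
  set p₁ : Path2 G := ⟨(τ₁, τ, σ), g1, g2, g4⟩ with hp₁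
  set p₂ : Path2 G := ⟨(τ, σ, σ₁), g2, g3, g5⟩ with hp₂
  obtain ⟨y, hy1, hy2, hy3⟩ := exists_nbr_ne hreg τ σ τ₁
  set p₃ : Path2 G := ⟨(σ, τ, y), g2.symm, hy1, fun he => hy2 he.symm⟩ with hp₃
  obtain ⟨u, hu1, hu2, hu3⟩ := exists_nbr_ne hreg σ₁ σ τ
  set q₃ : Path2 G := ⟨(σ, σ₁, u), g3, hu1, fun he => hu2 he.symm⟩ with hq₃
  have h12 : (gimel G Δ).Adj (P2.mk G p₁) (P2.mk G p₂) :=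
    gimel_adj_cons hΔall p₁ p₂ rfl rfl (show σ₁ ≠ τ from fun he => g5 he.symm)
  have h23 : (gimel G Δ).Adj (P2.mk G p₂) (P2.mk G p₃) := by
    rw [← P2.mk_p2rev p₂]
    exact gimel_adj_cons hΔall (p2rev G p₂) p₃ rfl rfl hy2
  have h2q : (gimel G Δ).Adj (P2.mk G p₂) (P2.mk G q₃) :=
    gimel_adj_cons hΔall p₂ q₃ rfl rfl hu2
  have h13 : P2.mk G p₁ ≠ P2.mk G p₃ := by
    intro he
    rcases P2.mk_eq_mk.mp he with he' | he'
    · have h5 : σ = τ₁ := congrArg (fun r : Path2 G => r.1.1) he'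
      exact g4 h5.symm
    · have h5 : y = τ₁ := congrArg (fun r : Path2 G => r.1.2.2) he'
      exact hy3 h5
  have h1q : P2.mk G p₁ ≠ P2.mk G q₃ := by
    intro he
    rcases P2.mk_eq_mk.mp he with he' | he'
    · have h5 : σ = τ₁ := congrArg (fun r : Path2 G => r.1.1) he'
      exact g4 h5.symm
    · have h5 : σ₁ = τ := congrArg (fun r : Path2 G => r.1.2.1) he'
      exact g5 h5.symm
  obtain ⟨x, hx1, hx2, hx3⟩ := h2T (P2.mk G p₁) (P2.mk G p₂) (P2.mk G p₃)
    (P2.mk G p₁) (P2.mk G p₂) (P2.mk G q₃) h12 h23 h13 h12 h2q h1q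
  have m1 : x • τ = τ := by
    have := P2Maps_mid hAP hx1
    simpa using this
  have m3 : x • τ = σ₁ := by
    have := P2Maps_mid hAP hx3
    simpa using this
  exact g5 (by rw [← m1, m3])

end Aux8
/-- The case `ℓ₁(Δ) = 3` for a connected `(X,2)`-arc-transitive
tetravalent graph `G` with `X` faithful on vertices:  `ℷ(G,Δ)` has valency 6, `Ξ(G,Δ)`
has valency 9, both are connected and `(X,1)`-transitive, and `G` is
`(X,3)`-arc-transitive. -/
theorem tetravalent_ell1_three {V X : Type*} [Fintype V] [Group X] [MulAction X V]
    (G : SimpleGraph V) (hreg : Regular G 4) (hconn : G.Connected)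
    (h2at : Arc2TransGraph X G)
    (hfaith : ∀ x : X, (∀ u : V, x • u = u) → x = 1)
    (Δ : Set (V × V × V × V)) (hΔ : SelfPairedOrbit3 X G Δ) (hℓ : Ell1Eq X Δ 3) :
    Regular (gimel G Δ) 6 ∧ Regular (Xi G Δ) 9 ∧
    (gimel G Δ).Connected ∧ (Xi G Δ).Connected ∧
    RelXSymm X (P2Maps X G) (gimel G Δ) ∧
    ¬ RelArc2Trans X (P2Maps X G) (gimel G Δ) ∧
    RelXSymm X (ArcMaps X G) (Xi G Δ) ∧
    ¬ RelArc2Trans X (ArcMaps X G) (Xi G Δ) ∧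
    Arc3Trans X G := by
  have hΔall : Δ = {t | IsArc3 G t} := delta_eq hreg h2at hΔ hℓ
  have h3T : Arc3Trans X G := arc3trans_of hreg h2at hΔ hℓ
  exact ⟨gimel_valency hreg hΔall, xi_valency hreg hΔall,
    gimel_connected hreg hconn hΔall, xi_connected hreg hconn hΔall,
    gimel_relxsymm h2at.1.1 h2at.2 h3T hΔall,
    gimel_not_2at hreg h2at.1.1 hΔ hΔall,
    xi_relxsymm h2at.1.1 h2at.1.2.2 h3T hΔall,
    xi_not_2at hreg hΔ hΔall, h3T⟩
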